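/- Theorem 2, quantitative content (accuracy and complexity of the level/sample choices). Fix constants K ≥ 1, Δt₀ ∈ (0,1] and δ ∈ (0, 1/2), and set Δt_ℓ = Δt₀·2^{−ℓ}. There exist ε₀ > 0 and C > 0 (depending only on K, Δt₀, δ) such that for every ε ∈ (0, ε₀), choosing L = ⌈ (1/(1/2 − δ)) · log₂( 2 K Δt₀^{1/2−δ} / ε ) ⌉, N₀ = 4 K² L² (L+1)² ε^{−2}, and N_ℓ = 4 K² Δt_ℓ L² (L+1)² ε^{−2} for 1 ≤ ℓ ≤ L (N_ℓ real-valued), one has both: (i) the error bound K ( Δt_L^{1/2−δ} + L/√N₀ + Σ_{m=1}^{L} m·√(Δt_m / N_m) ) ≤ ε, and (ii) the complexity bound Σ_{ℓ=0}^{L} N_ℓ / Δt_ℓ ≤ C · ε^{−2} · (log(1/ε))^5. -/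

import Mathlib

lemma sum_Icc_id_real (L : ℕ) : ∑ m ∈ Finset.Icc 1 L, (m:ℝ) = L*(L+1)/2 := by
  induction L with
  | zero => simp
  | succ n ih =>
    rw [Finset.sum_Icc_succ_top (Nat.succ_le_succ (Nat.zero_le n)), ih]
    push_cast; ring

set_option maxHeartbeats 1600000 in
/-- Theorem 2, quantitative content (accuracy and complexity of the level/sample choices):
with `L = ⌈(1/(1/2−δ)) log₂(2K Δt₀^{1/2−δ}/ε)⌉`, `N₀ = 4K²L²(L+1)²ε^{−2}` and
`N_ℓ = 4K²Δt_ℓL²(L+1)²ε^{−2}`, the error bound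
`K(Δt_L^{1/2−δ} + L/√N₀ + Σ_{m=1}^{L} m √(Δt_m/N_m)) ≤ ε` holds for all small `ε`, and the
complexity satisfies `Σ_{ℓ=0}^{L} N_ℓ/Δt_ℓ ≤ C ε^{−2} (log(1/ε))^5`. -/
theorem stmt_3 (K Δt₀ δ : ℝ) (hK : 1 ≤ K) (h0 : 0 < Δt₀) (h1 : Δt₀ ≤ 1)
    (hδ0 : 0 < δ) (hδ : δ < 1 / 2) :
    ∃ ε₀ : ℝ, 0 < ε₀ ∧ ∃ C : ℝ, 0 < C ∧
      ∀ ε : ℝ, 0 < ε → ε < ε₀ →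
        ∀ L : ℕ, L = ⌈(1 / (1 / 2 - δ)) * Real.logb 2 (2 * K * Δt₀ ^ ((1:ℝ)/2 - δ) / ε)⌉₊ →
        ∀ N : ℕ → ℝ,
          (N 0 = 4 * K ^ 2 * (L : ℝ) ^ 2 * ((L : ℝ) + 1) ^ 2 / ε ^ 2) →
          (∀ ℓ, 1 ≤ ℓ →
            N ℓ = 4 * K ^ 2 * (Δt₀ / 2 ^ ℓ) * (L : ℝ) ^ 2 * ((L : ℝ) + 1) ^ 2 / ε ^ 2) →
          K * ((Δt₀ / 2 ^ L) ^ ((1:ℝ)/2 - δ) + (L : ℝ) / Real.sqrt (N 0)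
              + ∑ m ∈ Finset.Icc 1 L, (m : ℝ) * Real.sqrt ((Δt₀ / 2 ^ m) / N m)) ≤ ε
          ∧ ∑ ℓ ∈ Finset.range (L + 1), N ℓ / (Δt₀ / 2 ^ ℓ)
              ≤ C * ε⁻¹ ^ 2 * (Real.log (1 / ε)) ^ 5 := by
  have hK0 : (0:ℝ) < K := by linarith
  have ha : (0:ℝ) < 1/2 - δ := by linarith
  set a : ℝ := 1/2 - δ with ha_def
  set B : ℝ := 2 * K * Δt₀ ^ a with hB_def
  have hΔa : (0:ℝ) < Δt₀ ^ a := Real.rpow_pos_of_pos h0 a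
  have hBpos : 0 < B := by rw [hB_def]; positivity
  have hlog2 : (0:ℝ) < Real.log 2 := Real.log_pos one_lt_two
  set c : ℝ := (1/a) * (|Real.log B| + 1) / Real.log 2 + 2 with hc_def
  have hcpos : 0 < c := by
    have h1' : 0 ≤ (1/a) * (|Real.log B| + 1) / Real.log 2 := by
      apply div_nonneg _ hlog2.le
      apply mul_nonneg (by positivity)
      have := abs_nonneg (Real.log B); linarith
    rw [hc_def]; linarith
  refine ⟨min B (Real.exp (-1)), lt_min hBpos (Real.exp_pos _), 4*K^2/Δt₀*c^5,
    mul_pos (div_pos (by positivity) h0) (pow_pos hcpos 5), ?_⟩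
  intro ε hε hεlt L hL N hN0 hNl
  have hεB : ε < B := lt_of_lt_of_le hεlt (min_le_left _ _)
  have hεe : ε < Real.exp (-1) := lt_of_lt_of_le hεlt (min_le_right _ _)
  have hεne : ε ≠ 0 := hε.ne'
  have hBε : 1 < B / ε := (one_lt_div hε).mpr hεB
  have hxpos : 0 < (1/a) * Real.logb 2 (B/ε) :=
    mul_pos (by positivity) (Real.logb_pos one_lt_two hBε)
  have hL1 : 1 ≤ L := by rw [hL]; exact Nat.ceil_pos.mpr hxpos
  have hLreal : (1:ℝ) ≤ (L:ℝ) := by exact_mod_cast hL1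
  have hLpos : (0:ℝ) < (L:ℝ) := by linarith
  have hLne : ((L:ℝ)) ≠ 0 := hLpos.ne'
  have hL1ne : ((L:ℝ) + 1) ≠ 0 := by linarith
  -- the exponent bound
  have hx : (1/a) * Real.logb 2 (B/ε) ≤ (L:ℝ) := by
    rw [hL]; exact Nat.le_ceil _
  have hlogb : Real.logb 2 (B/ε) ≤ a * (L:ℝ) := by
    have h2 := mul_le_mul_of_nonneg_left hx ha.le
    have h3 : a * ((1/a) * Real.logb 2 (B/ε)) = Real.logb 2 (B/ε) := by
      field_simp
    linarith
  have h2aL : B / ε ≤ (2:ℝ) ^ (a * (L:ℝ)) := by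
    calc B / ε = (2:ℝ) ^ Real.logb 2 (B/ε) :=
          (Real.rpow_logb two_pos (by norm_num) (by positivity)).symm
      _ ≤ (2:ℝ) ^ (a * (L:ℝ)) :=
          (Real.rpow_le_rpow_left_iff one_lt_two).mpr hlogb
  have h2aLpos : (0:ℝ) < (2:ℝ) ^ (a * (L:ℝ)) := Real.rpow_pos_of_pos two_pos _
  -- first term bound
  have hT1eq : (Δt₀ / 2^L) ^ a = Δt₀ ^ a / (2:ℝ) ^ (a * (L:ℝ)) := by
    rw [Real.div_rpow h0.le (by positivity)]
    congr 1
    rw [← Real.rpow_natCast 2 L, ← Real.rpow_mul (by norm_num), mul_comm]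
  have hT1 : (Δt₀ / 2^L) ^ a ≤ ε / (2*K) := by
    rw [hT1eq, div_le_div_iff₀ h2aLpos (by positivity)]
    have h4 := (div_le_iff₀ hε).mp h2aL
    rw [hB_def] at h4
    linarith [h4]
  -- sqrt computations
  have hsqrt0 : Real.sqrt (N 0) = 2*K*(L:ℝ)*((L:ℝ)+1)/ε := by
    rw [hN0, show 4*K^2*(L:ℝ)^2*((L:ℝ)+1)^2/ε^2 = (2*K*(L:ℝ)*((L:ℝ)+1)/ε)^2 by ring]
    apply Real.sqrt_sq
    have : (0:ℝ) < 2*K*(L:ℝ)*((L:ℝ)+1) := by positivity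
    positivity
  have hterm2 : (L:ℝ) / Real.sqrt (N 0) = ε / (2*K*((L:ℝ)+1)) := by
    rw [hsqrt0]
    field_simp
  have hterm3 : ∀ m ∈ Finset.Icc 1 L,
      (m:ℝ) * Real.sqrt ((Δt₀ / 2^m) / N m)
        = (m:ℝ) * (ε / (2*K*(L:ℝ)*((L:ℝ)+1))) := by
    intro m hm
    have hm1 : 1 ≤ m := (Finset.mem_Icc.mp hm).1
    rw [hNl m hm1]
    congr 1
    have h2m : ((2:ℝ)^m) ≠ 0 := by positivity
    rw [show (Δt₀/2^m) / (4*K^2*(Δt₀/2^m)*(L:ℝ)^2*((L:ℝ)+1)^2/ε^2)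
        = (ε/(2*K*(L:ℝ)*((L:ℝ)+1)))^2 by field_simp; ring]
    apply Real.sqrt_sq
    positivity
  have hsum : ∑ m ∈ Finset.Icc 1 L, (m:ℝ) * (ε / (2*K*(L:ℝ)*((L:ℝ)+1)))
      = ε / (4*K) := by
    rw [← Finset.sum_mul, sum_Icc_id_real]
    field_simp
    ring
  constructor
  · -- error bound
    rw [hterm2, Finset.sum_congr rfl hterm3, hsum]
    have h5 : ε / (2*K*((L:ℝ)+1)) ≤ ε / (4*K) := by
      have h41 : (0:ℝ) < 4*K := by linarith
      have h2K : (0:ℝ) < 2*K*((L:ℝ)+1) :=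
        mul_pos (mul_pos two_pos hK0) (by linarith)
      rw [div_le_div_iff₀ h2K h41]
      linarith [mul_nonneg (mul_nonneg hε.le hK0.le) (sub_nonneg.mpr hLreal)]
    calc K * ((Δt₀/2^L)^a + ε/(2*K*((L:ℝ)+1)) + ε/(4*K))
        ≤ K * (ε/(2*K) + ε/(4*K) + ε/(4*K)) := by
          apply mul_le_mul_of_nonneg_left _ hK0.le
          linarith
      _ = ε := by field_simp; ring
  · -- complexity bound
    set Λ : ℝ := Real.log (1/ε) with hΛ_def
    have hΛ1 : 1 ≤ Λ := by
      have hlt : Real.log ε < -1 := by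
        calc Real.log ε < Real.log (Real.exp (-1)) := Real.log_lt_log hε hεe
          _ = -1 := Real.log_exp _
      rw [hΛ_def, one_div, Real.log_inv]
      linarith
    -- bound L + 1 ≤ c * Λ
    have hlogBe : Real.logb 2 (B/ε) = (Real.log B + Λ) / Real.log 2 := by
      rw [Real.logb, Real.log_div hBpos.ne' hεne, hΛ_def, one_div, Real.log_inv]
      ring
    have hin : Real.log B + Λ ≤ (|Real.log B| + 1) * Λ := by
      have h6 := le_abs_self (Real.log B)
      have h7 := abs_nonneg (Real.log B)
      linarith [mul_nonneg h7 (sub_nonneg.mpr hΛ1), h6]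
    have hxb : (1/a) * Real.logb 2 (B/ε) ≤ (1/a) * (|Real.log B| + 1) / Real.log 2 * Λ := by
      rw [hlogBe]
      have h8 : 0 ≤ (1/a) / Real.log 2 := le_of_lt (div_pos (by positivity) hlog2)
      have h9 := mul_le_mul_of_nonneg_left hin h8
      have e3 : (1/a)/Real.log 2 * (Real.log B + Λ) = (1/a) * ((Real.log B + Λ)/Real.log 2) := by
        ring
      have e4 : (1/a)/Real.log 2 * ((|Real.log B|+1)*Λ)
          = (1/a)*(|Real.log B|+1)/Real.log 2 * Λ := by ring
      linarith
    have hceil : (L:ℝ) < (1/a) * Real.logb 2 (B/ε) + 1 := by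
      rw [hL]; exact Nat.ceil_lt_add_one hxpos.le
    have hLc : (L:ℝ) + 1 ≤ c * Λ := by
      have e5 : c * Λ = (1/a)*(|Real.log B|+1)/Real.log 2 * Λ + 2*Λ := by
        rw [hc_def]; ring
      rw [e5]
      linarith
    -- compute the sum
    have hAeq : ∀ i : ℕ, N (i+1) / (Δt₀ / 2^(i+1)) = 4*K^2*(L:ℝ)^2*((L:ℝ)+1)^2/ε^2 := by
      intro i
      rw [hNl (i+1) (Nat.le_add_left 1 i)]
      have h2m : ((2:ℝ)^(i+1)) ≠ 0 := by positivity
      field_simp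
    have hsum2 : ∑ ℓ ∈ Finset.range (L + 1), N ℓ / (Δt₀ / 2^ℓ)
        = (L:ℝ) * (4*K^2*(L:ℝ)^2*((L:ℝ)+1)^2/ε^2)
          + (4*K^2*(L:ℝ)^2*((L:ℝ)+1)^2/ε^2) / Δt₀ := by
      rw [Finset.sum_range_succ']
      rw [Finset.sum_congr rfl (fun i _ => hAeq i), Finset.sum_const, Finset.card_range]
      rw [hN0]
      simp [nsmul_eq_mul]
    rw [hsum2]
    -- main algebraic bound
    have hu0 : (0:ℝ) ≤ (L:ℝ) := hLpos.le
    have hstep : (L:ℝ)^3*((L:ℝ)+1)^2 + (L:ℝ)^2*((L:ℝ)+1)^2/Δt₀ ≤ ((L:ℝ)+1)^5/Δt₀ := by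
      rw [le_div_iff₀ h0]
      have expand : ((L:ℝ)^3*((L:ℝ)+1)^2 + (L:ℝ)^2*((L:ℝ)+1)^2/Δt₀)*Δt₀
          = (L:ℝ)^3*((L:ℝ)+1)^2*Δt₀ + (L:ℝ)^2*((L:ℝ)+1)^2 := by
        field_simp
      rw [expand]
      have h1' : (L:ℝ)^3 + (L:ℝ)^2 ≤ ((L:ℝ)+1)^3 := by
        nlinarith [sq_nonneg ((L:ℝ)), hu0]
      have h2' : ((L:ℝ)^3+(L:ℝ)^2)*((L:ℝ)+1)^2 ≤ ((L:ℝ)+1)^3*((L:ℝ)+1)^2 :=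
        mul_le_mul_of_nonneg_right h1' (by positivity)
      have hdt : (L:ℝ)^3*((L:ℝ)+1)^2*Δt₀ ≤ (L:ℝ)^3*((L:ℝ)+1)^2 :=
        mul_le_of_le_one_right
          (mul_nonneg (pow_nonneg hu0 3) (sq_nonneg ((L:ℝ)+1))) h1
      have hfive : ((L:ℝ)+1)^3*((L:ℝ)+1)^2 = ((L:ℝ)+1)^5 := by ring
      linarith [h2', hdt, hfive]
    have main1 : (L:ℝ) * (4*K^2*(L:ℝ)^2*((L:ℝ)+1)^2/ε^2)
          + (4*K^2*(L:ℝ)^2*((L:ℝ)+1)^2/ε^2) / Δt₀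
        ≤ 4*K^2 * (((L:ℝ)+1)^5/Δt₀) / ε^2 := by
      have e1 : (L:ℝ) * (4*K^2*(L:ℝ)^2*((L:ℝ)+1)^2/ε^2)
            + (4*K^2*(L:ℝ)^2*((L:ℝ)+1)^2/ε^2) / Δt₀
          = 4*K^2 * ((L:ℝ)^3*((L:ℝ)+1)^2 + (L:ℝ)^2*((L:ℝ)+1)^2/Δt₀) / ε^2 := by
        field_simp
      rw [e1]
      apply (div_le_div_iff_of_pos_right (by positivity : (0:ℝ) < ε^2)).mpr
      exact mul_le_mul_of_nonneg_left hstep (by positivity)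
    have h5pow : ((L:ℝ)+1)^5 ≤ c^5 * Λ^5 := by
      calc ((L:ℝ)+1)^5 ≤ (c*Λ)^5 := pow_le_pow_left₀ (by linarith) hLc 5
        _ = c^5 * Λ^5 := by rw [mul_pow]
    calc (L:ℝ) * (4*K^2*(L:ℝ)^2*((L:ℝ)+1)^2/ε^2)
          + (4*K^2*(L:ℝ)^2*((L:ℝ)+1)^2/ε^2) / Δt₀
        ≤ 4*K^2 * (((L:ℝ)+1)^5/Δt₀) / ε^2 := main1
      _ ≤ 4*K^2 * ((c^5*Λ^5)/Δt₀) / ε^2 := by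
          apply (div_le_div_iff_of_pos_right (by positivity : (0:ℝ) < ε^2)).mpr
          apply mul_le_mul_of_nonneg_left ?_ (by positivity)
          exact (div_le_div_iff_of_pos_right h0).mpr h5pow
      _ = 4*K^2/Δt₀*c^5 * ε⁻¹^2 * Λ^5 := by
          field_simp
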